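/- arXiv:1901.00838 — 9 statements merged into one kernel-verified Lean document; each statement's English description precedes it below -/
import Mathlib

section
/- Let a, b, c be real numbers with a > 0, b > 0, b < a, and c^2 > a*b, and let M be the 2×2 real matrix !![a, c; -c, -b]. Then every eigenvalue of M (i.e., every element of the spectrum of M viewed as a matrix over ℂ) has strictly positive real part. -/
open Matrix

/-- Example 1 of the paper: a matrix with the sign structure of the Jacobian of the
gradient dynamics at a non-Nash critical point of a zero-sum game can be Hurwitz. -/
theorem stmt_0 (a b c : ℝ) (ha : 0 < a) (hb : 0 < b) (hba : b < a) (hc : c ^ 2 > a * b) :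
    ∀ μ ∈ spectrum ℂ ((!![a, c; -c, -b] : Matrix (Fin 2) (Fin 2) ℝ).map Complex.ofReal),
      0 < μ.re := by
  intro μ hμ
  rw [spectrum.mem_iff] at hμ
  rw [Matrix.isUnit_iff_isUnit_det] at hμ
  rw [isUnit_iff_ne_zero, not_not] at hμ
  rw [Matrix.det_fin_two] at hμ
  simp [Matrix.algebraMap_matrix_apply, Matrix.map_apply] at hμ
  have hre := congrArg Complex.re hμ
  have him := congrArg Complex.im hμ
  simp [Complex.mul_re, Complex.mul_im, Complex.add_re, Complex.add_im,
    Complex.sub_re, Complex.sub_im] at hre him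
  have him' : μ.im = 0 ∨ 2 * μ.re + b - a = 0 := by
    rcases mul_eq_zero.mp (show μ.im * (2 * μ.re + b - a) = 0 by linarith [him]) with h | h
    · exact Or.inl h
    · exact Or.inr h
  rcases him' with h | h
  · nlinarith [sq_nonneg μ.re, sq_nonneg (μ.re - (a - b) / 2)]
  · linarith
end

section
/- Under the stated assumptions on ω, J, λ and h, let z* ∈ ℝ^d satisfy ω(z*) = 0 and suppose J(z*) is invertible. Then h is differentiable at z* and the Jacobian matrix of h at z* equals (1/2)(J(z*) + Jᵀ(z*)); in particular it is a symmetric matrix. -/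
open Matrix Asymptotics

attribute [local instance] Matrix.seminormedAddCommGroup Matrix.normedAddCommGroup Matrix.normedSpace

noncomputable def mulVecCLM {d : ℕ} :
    Matrix (Fin d) (Fin d) ℝ →L[ℝ] (Fin d → ℝ) →L[ℝ] (Fin d → ℝ) :=
  LinearMap.toContinuousLinearMap
  { toFun := fun M => LinearMap.toContinuousLinearMap (Matrix.mulVecLin M)
    map_add' := by
      intro A B; ext v i
      simp [Matrix.add_mulVec]
    map_smul' := by
      intro c A; ext v i
      simp [Matrix.smul_mulVec] }

@[simp] lemma mulVecCLM_apply {d : ℕ} (M : Matrix (Fin d) (Fin d) ℝ) (v : Fin d → ℝ) :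
    mulVecCLM M v = M.mulVec v := rfl

/-- product rule when the vector factor vanishes: only continuity of the matrix factor
is needed. -/
lemma key_deriv {d : ℕ} (B : (Fin d → ℝ) → Matrix (Fin d) (Fin d) ℝ)
    (v : (Fin d → ℝ) → (Fin d → ℝ)) (Dv : (Fin d → ℝ) →L[ℝ] (Fin d → ℝ))
    (zs : Fin d → ℝ) (hB : ContinuousAt B zs) (hv : HasFDerivAt v Dv zs)
    (h0 : v zs = 0) :
    HasFDerivAt (fun z => (B z).mulVec (v z)) ((mulVecCLM (B zs)).comp Dv) zs := by
  have h1 : HasFDerivAt (fun z => (mulVecCLM (B zs)) (v z)) ((mulVecCLM (B zs)).comp Dv) zs :=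
    (mulVecCLM (B zs)).hasFDerivAt.comp zs hv
  have h2 : HasFDerivAt (fun z => (mulVecCLM (B z - B zs)) (v z))
      (0 : (Fin d → ℝ) →L[ℝ] (Fin d → ℝ)) zs := by
    rw [hasFDerivAt_iff_isLittleO_nhds_zero]
    have hvO : (fun z' : Fin d → ℝ => v (zs + z')) =O[nhds 0] (fun z' => z') := by
      have := hv.isBigO_sub
      have h' : (fun z' : Fin d → ℝ => v (zs + z') - v zs) =O[nhds 0] fun z' => (zs + z') - zs := by
        have hmap : Filter.Tendsto (fun z' : Fin d → ℝ => zs + z') (nhds 0) (nhds zs) := by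
          simpa using (continuous_add_left zs).tendsto (0 : Fin d → ℝ)
        exact this.comp_tendsto hmap
      simpa [h0] using h'
    have hBo : (fun z' : Fin d → ℝ => ‖B (zs + z') - B zs‖) =o[nhds 0]
        (fun _ => (1 : ℝ)) := by
      rw [isLittleO_one_iff]
      have : Filter.Tendsto (fun z' : Fin d → ℝ => B (zs + z') - B zs) (nhds 0) (nhds 0) := by
        have hmap : Filter.Tendsto (fun z' : Fin d → ℝ => zs + z') (nhds 0) (nhds zs) := by
          simpa using (continuous_add_left zs).tendsto (0 : Fin d → ℝ)
        have := Filter.Tendsto.sub_const (Filter.Tendsto.comp hB hmap) (B zs)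
        simpa using this
      simpa using this.norm
    have hprod : (fun z' : Fin d → ℝ => ‖B (zs + z') - B zs‖ * ‖v (zs + z')‖)
        =o[nhds 0] (fun z' => z') := by
      have := hBo.mul_isBigO hvO.norm_left.norm_right
      simp only [one_mul] at this
      rwa [Asymptotics.isLittleO_norm_right] at this
    have hle : (fun z' : Fin d → ℝ => mulVecCLM (B (zs + z') - B zs) (v (zs + z')))
        =O[nhds 0] (fun z' => ‖B (zs + z') - B zs‖ * ‖v (zs + z')‖) := by
      letI : SeminormedAddCommGroup (Matrix (Fin d) (Fin d) ℝ →L[ℝ] (Fin d → ℝ) →L[ℝ] (Fin d → ℝ)) :=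
        ContinuousLinearMap.toSeminormedAddCommGroup
      apply IsBigO.of_bound (‖(mulVecCLM : Matrix (Fin d) (Fin d) ℝ →L[ℝ] _)‖)
      filter_upwards with z'
      calc ‖mulVecCLM (B (zs + z') - B zs) (v (zs + z'))‖
          ≤ ‖(mulVecCLM : Matrix (Fin d) (Fin d) ℝ →L[ℝ] _)‖ * ‖B (zs + z') - B zs‖ *
            ‖v (zs + z')‖ := ContinuousLinearMap.le_opNorm₂ _ _ _
        _ = ‖(mulVecCLM : Matrix (Fin d) (Fin d) ℝ →L[ℝ] _)‖ *
            ‖(‖B (zs + z') - B zs‖ * ‖v (zs + z')‖)‖ := by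
            rw [mul_assoc]; congr 1
            rw [Real.norm_eq_abs, abs_of_nonneg (by positivity)]
    have := hle.trans_isLittleO hprod
    simpa [h0] using this
  have h3 := h1.add h2
  have heq : (fun z => (mulVecCLM (B zs)) (v z) + (mulVecCLM (B z - B zs)) (v z))
      = fun z => (B z).mulVec (v z) := by
    funext z
    simp [Matrix.sub_mulVec]
  rw [Pi.add_def] at h3
  rw [heq] at h3
  simpa using h3

/-- Jacobian computation in the proof of Theorem 1: at a critical point `z*` of `ω` where
`J(z*)` is invertible, the Jacobian of the adjusted vector field `h` is the symmetric matrix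
`(1/2)(J(z*) + J(z*)ᵀ)`. -/
theorem stmt_3 {d : ℕ}
    (ω : (Fin d → ℝ) → (Fin d → ℝ))
    (J : (Fin d → ℝ) → Matrix (Fin d) (Fin d) ℝ)
    (lam : (Fin d → ℝ) → ℝ)
    (hω : ContDiff ℝ 2 ω)
    (hJ : ∀ z, HasFDerivAt ω (LinearMap.toContinuousLinearMap (Matrix.mulVecLin (J z))) z)
    (hlamC1 : ContDiff ℝ 1 lam)
    (hlam_nonneg : ∀ z, 0 ≤ lam z)
    (hlam_zero : ∀ z, lam z = 0 ↔ ω z = 0)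
    (hinv : ∀ z, IsUnit ((J z)ᵀ * J z + lam z • (1 : Matrix (Fin d) (Fin d) ℝ)))
    (h : (Fin d → ℝ) → (Fin d → ℝ))
    (hdef : ∀ z, h z = (1 / 2 : ℝ) •
      (ω z + ((J z)ᵀ).mulVec ((((J z)ᵀ * J z + lam z • (1 : Matrix (Fin d) (Fin d) ℝ))⁻¹).mulVec
        (((J z)ᵀ).mulVec (ω z)))))
    (zs : Fin d → ℝ)
    (hcrit : ω zs = 0)
    (hJinv : IsUnit (J zs)) :
    HasFDerivAt h
      (LinearMap.toContinuousLinearMap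
        (Matrix.mulVecLin ((1 / 2 : ℝ) • (J zs + (J zs)ᵀ)))) zs ∧
    ((1 / 2 : ℝ) • (J zs + (J zs)ᵀ)).IsSymm := by
  constructor
  · -- notation
    set M : (Fin d → ℝ) → Matrix (Fin d) (Fin d) ℝ :=
      fun z => (J z)ᵀ * J z + lam z • (1 : Matrix (Fin d) (Fin d) ℝ) with hM
    set A : (Fin d → ℝ) → Matrix (Fin d) (Fin d) ℝ :=
      fun z => (J z)ᵀ * (M z)⁻¹ * (J z)ᵀ with hA
    -- continuity of J
    have hJcont : Continuous J := by
      have hfd : Continuous (fderiv ℝ ω) := hω.continuous_fderiv (by norm_num)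
      have hJeq : ∀ z, J z = fun i j => fderiv ℝ ω z (Pi.single j 1) i := by
        intro z
        funext i j
        rw [(hJ z).fderiv]
        simp [Matrix.mulVecLin_apply, Matrix.mulVec_single]
      have : Continuous fun z => (fun i j => fderiv ℝ ω z (Pi.single j 1) i :
          Matrix (Fin d) (Fin d) ℝ) := by
        apply continuous_matrix
        intro i j
        exact (continuous_apply i).comp (hfd.clm_apply continuous_const)
      rw [show J = fun z => (fun i j => fderiv ℝ ω z (Pi.single j 1) i :
          Matrix (Fin d) (Fin d) ℝ) from funext hJeq]
      exact this
    have hMcont : Continuous M :=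
      (hJcont.matrix_transpose.matrix_mul hJcont).add
        ((hlamC1.continuous).smul continuous_const)
    have hdetne : (M zs).det ≠ 0 := by
      have := (Matrix.isUnit_iff_isUnit_det _).mp (hinv zs)
      exact IsUnit.ne_zero this
    have hinvcont : ContinuousAt (fun z => (M z)⁻¹) zs := by
      have : ContinuousAt Inv.inv (M zs) := by
        apply continuousAt_matrix_inv
        rw [Ring.inverse_eq_inv']
        exact continuousAt_inv₀ hdetne
      exact this.comp hMcont.continuousAt
    have hAcont : ContinuousAt A zs :=
      ((hJcont.matrix_transpose.continuousAt.mul hinvcont).mul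
        hJcont.matrix_transpose.continuousAt)
    -- the derivative of the adjustment term
    have hg : HasFDerivAt (fun z => (A z).mulVec (ω z))
        ((mulVecCLM (A zs)).comp (LinearMap.toContinuousLinearMap (Matrix.mulVecLin (J zs)))) zs :=
      key_deriv A ω _ zs hAcont (hJ zs) hcrit
    -- rewrite h
    have hhe : h = fun z => (1 / 2 : ℝ) • (ω z + (A z).mulVec (ω z)) := by
      funext z
      rw [hdef z]
      simp [hA, hM, Matrix.mulVec_mulVec, mul_assoc]
    -- λ zs = 0 and matrix identity
    have hlam0 : lam zs = 0 := (hlam_zero zs).mpr hcrit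
    have hMzs : M zs = (J zs)ᵀ * J zs := by
      simp [hM, hlam0]
    have hdetJ : IsUnit (J zs).det := (Matrix.isUnit_iff_isUnit_det _).mp hJinv
    have hdetne' : IsUnit ((J zs)ᵀ * J zs).det := by
      rw [← hMzs]; exact (Matrix.isUnit_iff_isUnit_det _).mp (hinv zs)
    have hAid : A zs * J zs = (J zs)ᵀ := by
      rw [hA]
      simp only [hMzs, mul_assoc]
      rw [Matrix.nonsing_inv_mul _ hdetne', mul_one]
    have hderiv : HasFDerivAt h
        ((1 / 2 : ℝ) • ((LinearMap.toContinuousLinearMap (Matrix.mulVecLin (J zs))) +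
          (mulVecCLM (A zs)).comp (LinearMap.toContinuousLinearMap (Matrix.mulVecLin (J zs))))) zs := by
      rw [hhe]
      exact ((hJ zs).add hg).const_smul (1 / 2 : ℝ)
    convert hderiv using 1
    ext v i
    simp only [ContinuousLinearMap.smul_apply, ContinuousLinearMap.add_apply,
      ContinuousLinearMap.comp_apply, LinearMap.coe_toContinuousLinearMap',
      Matrix.mulVecLin_apply, mulVecCLM_apply, Matrix.mulVec_mulVec, hAid]
    rw [← Matrix.add_mulVec, Matrix.smul_mulVec]
  · show ((1 / 2 : ℝ) • (J zs + (J zs)ᵀ))ᵀ = _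
    simp only [Matrix.transpose_smul, Matrix.transpose_add, Matrix.transpose_transpose]
    rw [add_comm]
end

section
/- Let f : (ℝ^{d_x}) × (ℝ^{d_y}) → ℝ be three times continuously differentiable, define ω(x,y) = (∇ₓ f(x,y), -∇_y f(x,y)) (the simultaneous-gradient vector field of the zero-sum game in which the x-player minimizes f and the y-player maximizes f), let J(z) be the Jacobian matrix of ω at z, let λ : ℝ^{d_x+d_y} → ℝ be continuously differentiable with 0 ≤ λ(z) for all z and λ(z) = 0 ⟺ ω(z) = 0, assume Jᵀ(z)J(z) + λ(z)I is invertible for every z, and define h(z) = (1/2)(ω(z) + Jᵀ(z)(Jᵀ(z)J(z) + λ(z)I)⁻¹ Jᵀ(z) ω(z)). Let z* = (x*, y*) satisfy ω(z*) = 0 and suppose J(z*) is invertible. Then: (i) every eigenvalue of the Jacobian matrix of h at z* is real; and (ii) every eigenvalue of the Jacobian matrix of h at z* is strictly positive if and only if z* is a differential Nash equilibrium of the game, i.e., the Hessian of x ↦ f(x, y*) at x* is positive definite and the Hessian of y ↦ f(x*, y) at y* is negative definite. -/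
open Matrix

open Matrix Asymptotics Filter

section Aux

private lemma aux_clm_apply {E F G : Type*} [NormedAddCommGroup E] [NormedSpace ℝ E]
    [NormedAddCommGroup F] [NormedSpace ℝ F] [NormedAddCommGroup G] [NormedSpace ℝ G]
    {c : E → (F →L[ℝ] G)} {u : E → F} {L : E →L[ℝ] F} {z : E}
    (hc : ContinuousAt c z) (hu : HasFDerivAt u L z) (h0 : u z = 0) :
    HasFDerivAt (fun x => c x (u x)) ((c z).comp L) z := by
  rw [hasFDerivAt_iff_isLittleO] at hu ⊢
  have key : (fun x => c x (u x) - c z (u z) - (c z).comp L (x - z))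
      = fun x => c x (u x - u z - L (x - z)) + (c x - c z) (L (x - z)) := by
    funext x
    simp only [map_sub, ContinuousLinearMap.comp_apply, ContinuousLinearMap.sub_apply, h0,
      map_zero]
    abel
  rw [key]
  have h1 : (fun x => c x (u x - u z - L (x - z))) =o[nhds z] fun x => x - z := by
    refine IsBigO.trans_isLittleO ?_ hu
    rw [isBigO_iff]
    refine ⟨‖c z‖ + 1, ?_⟩
    have hev : ∀ᶠ x in nhds z, ‖c x‖ ≤ ‖c z‖ + 1 :=
      (hc.norm : Filter.Tendsto _ _ _).eventually_le_const (lt_add_one _)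
    filter_upwards [hev] with x hx
    calc ‖c x (u x - u z - L (x - z))‖ ≤ ‖c x‖ * ‖u x - u z - L (x - z)‖ :=
          (c x).le_opNorm _
      _ ≤ (‖c z‖ + 1) * ‖u x - u z - L (x - z)‖ := by
          exact mul_le_mul_of_nonneg_right hx (norm_nonneg _)
  have h2 : (fun x => (c x - c z) (L (x - z))) =o[nhds z] fun x => x - z := by
    rw [isLittleO_iff]
    intro ε hε
    have hpos : 0 < ε / (‖L‖ + 1) := div_pos hε (by positivity)
    have htend : Filter.Tendsto (fun x => ‖c x - c z‖) (nhds z) (nhds 0) := by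
      have : Filter.Tendsto (fun x => c x - c z) (nhds z) (nhds (c z - c z)) :=
        hc.sub continuousAt_const
      simpa using this.norm
    have hev : ∀ᶠ x in nhds z, ‖c x - c z‖ ≤ ε / (‖L‖ + 1) :=
      htend.eventually_le_const hpos
    filter_upwards [hev] with x hx
    calc ‖(c x - c z) (L (x - z))‖ ≤ ‖c x - c z‖ * ‖L (x - z)‖ := (c x - c z).le_opNorm _
      _ ≤ (ε / (‖L‖ + 1)) * (‖L‖ * ‖x - z‖) := by
          refine mul_le_mul hx (L.le_opNorm _) (norm_nonneg _) hpos.le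
      _ ≤ ε * ‖x - z‖ := by
          rw [div_mul_eq_mul_div, div_le_iff₀ (by positivity : (0:ℝ) < ‖L‖ + 1)]
          have := norm_nonneg L; have := norm_nonneg (x - z)
          nlinarith
  exact h1.add h2

variable {n : Type*} [Fintype n] [DecidableEq n]

lemma aux_posdef_of_eigs {A : Matrix n n ℝ} (hA : A.IsHermitian)
    (h : ∀ i, 0 < hA.eigenvalues i) : A.PosDef := by
  exact hA.posDef_iff_eigenvalues_pos.2 h

lemma aux_spectrum_map {A : Matrix n n ℝ} (hA : A.IsHermitian) :
    spectrum ℂ (A.map Complex.ofReal) = Set.range (fun i => (hA.eigenvalues i : ℂ)) := by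
  have hU2 := (Matrix.mem_unitaryGroup_iff).mp (hA.eigenvectorUnitary).2
  have hU1 := (Matrix.mem_unitaryGroup_iff').mp (hA.eigenvectorUnitary).2
  set U : Matrix n n ℝ := (hA.eigenvectorUnitary : Matrix n n ℝ) with hUdef
  let φ : ℝ →+* ℂ := Complex.ofRealHom
  have hone : (1 : Matrix n n ℝ).map ⇑φ = 1 := Matrix.map_one _ (map_zero φ) (map_one φ)
  let u : (Matrix n n ℂ)ˣ :=
    ⟨U.map ⇑φ, (star U).map ⇑φ,
      by rw [← Matrix.map_mul, hU2, hone],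
      by rw [← Matrix.map_mul, hU1, hone]⟩
  have hAeq : A.map ⇑φ = (u : Matrix n n ℂ) * (Matrix.diagonal fun i => ((hA.eigenvalues i : ℝ) : ℂ)) * ((u⁻¹ : (Matrix n n ℂ)ˣ) : Matrix n n ℂ) := by
    show A.map ⇑φ = (U.map ⇑φ) * _ * ((star U).map ⇑φ)
    conv_lhs => rw [hA.spectral_theorem, Unitary.conjStarAlgAut_apply]
    rw [Matrix.map_mul, Matrix.map_mul, Matrix.diagonal_map (map_zero φ)]
    rfl
  have h0 : (A.map Complex.ofReal) = A.map ⇑φ := rfl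
  rw [h0, hAeq, spectrum.units_conjugate, spectrum_diagonal]

lemma aux_posdef_blocks {m l : Type*} [Fintype m] [Fintype l] [DecidableEq m] [DecidableEq l]
    {P : Matrix m m ℝ} {N : Matrix l l ℝ} (hP : P.IsHermitian) (hN : N.IsHermitian) :
    (Matrix.fromBlocks P 0 0 N).PosDef ↔ P.PosDef ∧ N.PosDef := by
  constructor
  · intro hA
    constructor
    · refine Matrix.PosDef.of_dotProduct_mulVec_pos hP fun x hx => ?_
      have hne : (Sum.elim x (0 : l → ℝ)) ≠ 0 :=
        fun h => hx (funext fun i => congrFun h (Sum.inl i))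
      have := hA.dotProduct_mulVec_pos hne
      simpa [star_trivial, Matrix.fromBlocks_mulVec, Matrix.zero_mulVec, Matrix.mulVec_zero,
        sumElim_dotProduct_sumElim] using this
    · refine Matrix.PosDef.of_dotProduct_mulVec_pos hN fun y hy => ?_
      have hne : (Sum.elim (0 : m → ℝ) y) ≠ 0 :=
        fun h => hy (funext fun i => congrFun h (Sum.inr i))
      have := hA.dotProduct_mulVec_pos hne
      simpa [star_trivial, Matrix.fromBlocks_mulVec, Matrix.zero_mulVec, Matrix.mulVec_zero,
        sumElim_dotProduct_sumElim] using this
  · rintro ⟨hPd, hNd⟩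
    refine Matrix.PosDef.of_dotProduct_mulVec_pos (Matrix.IsHermitian.fromBlocks hP (by simp) hN) fun x hx => ?_
    obtain ⟨y, z, rfl⟩ : ∃ y z, x = Sum.elim y z :=
      ⟨x ∘ Sum.inl, x ∘ Sum.inr, funext fun i => by cases i <;> rfl⟩
    have hq : star (Sum.elim y z) ⬝ᵥ (Matrix.fromBlocks P 0 0 N *ᵥ Sum.elim y z)
        = y ⬝ᵥ (P *ᵥ y) + z ⬝ᵥ (N *ᵥ z) := by
      rw [star_trivial]
      simp [Matrix.fromBlocks_mulVec, Matrix.zero_mulVec, Matrix.mulVec_zero,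
        sumElim_dotProduct_sumElim]
    rw [hq]
    rcases Classical.em (y = 0) with h1 | h1
    · have h2 : z ≠ 0 := by
        intro h2; apply hx
        subst h1; subst h2
        funext i; cases i <;> rfl
      have hlt := hNd.dotProduct_mulVec_pos h2
      rw [star_trivial] at hlt
      have hp := hPd.posSemidef.dotProduct_mulVec_nonneg y
      rw [star_trivial] at hp
      linarith
    · have hlt := hPd.dotProduct_mulVec_pos h1
      rw [star_trivial] at hlt
      have hnn := hNd.posSemidef.dotProduct_mulVec_nonneg z
      rw [star_trivial] at hnn
      linarith


end Aux


/-- The Jacobian matrix (w.r.t. the standard basis) of a map `h : ℝ^ι → ℝ^ι` at `z`. -/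
noncomputable def jacobianMatrix {ι : Type*} [Fintype ι] [DecidableEq ι]
    (h : (ι → ℝ) → (ι → ℝ)) (z : ι → ℝ) : Matrix ι ι ℝ :=
  LinearMap.toMatrix' (fderiv ℝ h z).toLinearMap

/-- Theorem 1 of the paper: at a critical point `z*` of the simultaneous-gradient field `ω`
of the zero-sum game on `f`, all eigenvalues of the Jacobian of the adjusted field `h` are
real, and they are all strictly positive iff `z*` is a differential Nash equilibrium. -/
theorem stmt_4 {dx dy : ℕ}
    (f : ((Fin dx ⊕ Fin dy) → ℝ) → ℝ)
    (hf : ContDiff ℝ 3 f)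
    (ω : ((Fin dx ⊕ Fin dy) → ℝ) → ((Fin dx ⊕ Fin dy) → ℝ))
    (hω : ∀ z, (∀ i : Fin dx, ω z (Sum.inl i) = fderiv ℝ f z (Pi.single (Sum.inl i) 1)) ∧
               (∀ j : Fin dy, ω z (Sum.inr j) = -(fderiv ℝ f z (Pi.single (Sum.inr j) 1))))
    (J : ((Fin dx ⊕ Fin dy) → ℝ) → Matrix (Fin dx ⊕ Fin dy) (Fin dx ⊕ Fin dy) ℝ)
    (hJ : ∀ z, HasFDerivAt ω (LinearMap.toContinuousLinearMap (Matrix.mulVecLin (J z))) z)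
    (lam : ((Fin dx ⊕ Fin dy) → ℝ) → ℝ)
    (hlamC1 : ContDiff ℝ 1 lam)
    (hlam_nonneg : ∀ z, 0 ≤ lam z)
    (hlam_zero : ∀ z, lam z = 0 ↔ ω z = 0)
    (hinv : ∀ z, IsUnit ((J z)ᵀ * J z +
      lam z • (1 : Matrix (Fin dx ⊕ Fin dy) (Fin dx ⊕ Fin dy) ℝ)))
    (h : ((Fin dx ⊕ Fin dy) → ℝ) → ((Fin dx ⊕ Fin dy) → ℝ))
    (hdef : ∀ z, h z = (1 / 2 : ℝ) •
      (ω z + ((J z)ᵀ).mulVec ((((J z)ᵀ * J z +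
        lam z • (1 : Matrix (Fin dx ⊕ Fin dy) (Fin dx ⊕ Fin dy) ℝ))⁻¹).mulVec
        (((J z)ᵀ).mulVec (ω z)))))
    (zs : (Fin dx ⊕ Fin dy) → ℝ)
    (hcrit : ω zs = 0)
    (hJinv : IsUnit (J zs)) :
    DifferentiableAt ℝ h zs ∧
    (∀ μ ∈ spectrum ℂ ((jacobianMatrix h zs).map Complex.ofReal), μ.im = 0) ∧
    ((∀ μ ∈ spectrum ℂ ((jacobianMatrix h zs).map Complex.ofReal), 0 < μ.re) ↔
      (Matrix.PosDef (Matrix.of fun i j : Fin dx =>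
          fderiv ℝ (fun z => fderiv ℝ f z (Pi.single (Sum.inl j) 1)) zs
            (Pi.single (Sum.inl i) 1)) ∧
       Matrix.PosDef (-(Matrix.of fun i j : Fin dy =>
          fderiv ℝ (fun z => fderiv ℝ f z (Pi.single (Sum.inr j) 1)) zs
            (Pi.single (Sum.inr i) 1))))) := by
  classical
  -- smoothness of ω
  have hf2 : ContDiff ℝ 2 (fderiv ℝ f) := hf.fderiv_right (m := 2) (by norm_num)
  have hω2 : ContDiff ℝ 2 ω := by
    rw [contDiff_pi]
    intro i
    cases i with
    | inl i =>
        have he : (fun z => ω z (Sum.inl i)) =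
            fun z => fderiv ℝ f z (Pi.single (Sum.inl i) 1) := funext fun z => (hω z).1 i
        rw [he]; exact hf2.clm_apply contDiff_const
    | inr j =>
        have he : (fun z => ω z (Sum.inr j)) =
            fun z => -(fderiv ℝ f z (Pi.single (Sum.inr j) 1)) := funext fun z => (hω z).2 j
        rw [he]; exact (hf2.clm_apply contDiff_const).neg
  -- continuity of J
  have hfdω : Continuous (fderiv ℝ ω) := (hω2.fderiv_right (m := 1) (by norm_num)).continuous
  have hJentry : ∀ z, J z = Matrix.of fun i j => fderiv ℝ ω z (Pi.single j 1) i := by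
    intro z
    ext i j
    rw [(hJ z).fderiv]
    simp [Matrix.mulVec_single]
  have hJcont : Continuous J := by
    apply continuous_matrix
    intro i j
    have he : (fun z => J z i j) = fun z => fderiv ℝ ω z (Pi.single j 1) i := by
      funext z; rw [hJentry z]; rfl
    rw [he]
    exact (continuous_apply i).comp (hfdω.clm_apply continuous_const)
  -- the matrix-valued functions
  set Mz : ((Fin dx ⊕ Fin dy) → ℝ) → Matrix (Fin dx ⊕ Fin dy) (Fin dx ⊕ Fin dy) ℝ := fun z => (J z)ᵀ * J z + lam z • 1 with hMzdef
  set B : ((Fin dx ⊕ Fin dy) → ℝ) → Matrix (Fin dx ⊕ Fin dy) (Fin dx ⊕ Fin dy) ℝ := fun z => (J z)ᵀ * (Mz z)⁻¹ * (J z)ᵀ with hBdef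
  have hMcont : Continuous Mz :=
    (hJcont.matrix_transpose.matrix_mul hJcont).add (hlamC1.continuous.smul continuous_const)
  have hMinvcont : ContinuousAt (fun z => (Mz z)⁻¹) zs := by
    have hdet : Continuous fun z => (Mz z).det := hMcont.matrix_det
    have hadj : Continuous fun z => (Mz z).adjugate := hMcont.matrix_adjugate
    have hdetne : (Mz zs).det ≠ 0 :=
      (((Matrix.isUnit_iff_isUnit_det _).1 (hinv zs))).ne_zero
    have h1 : ContinuousAt (fun z => Ring.inverse ((Mz z).det)) zs := by
      simp only [Ring.inverse_eq_inv']
      exact hdet.continuousAt.inv₀ hdetne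
    have heq : (fun z => (Mz z)⁻¹) = fun z => Ring.inverse ((Mz z).det) • (Mz z).adjugate :=
      funext fun z => Matrix.inv_def _
    rw [heq]
    exact h1.smul hadj.continuousAt
  have hBcont : ContinuousAt B zs :=
    ((hJcont.matrix_transpose.continuousAt.mul hMinvcont).mul
      hJcont.matrix_transpose.continuousAt)
  -- bundled mulVecLin
  set Φ : Matrix (Fin dx ⊕ Fin dy) (Fin dx ⊕ Fin dy) ℝ →ₗ[ℝ] (((Fin dx ⊕ Fin dy) → ℝ) →L[ℝ] ((Fin dx ⊕ Fin dy) → ℝ)) :=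
    { toFun := fun A => LinearMap.toContinuousLinearMap A.mulVecLin
      map_add' := fun A B => by
        ext v i
        simp [LinearMap.coe_toContinuousLinearMap', Matrix.add_mulVec]
      map_smul' := fun c A => by
        ext v i
        simp [LinearMap.coe_toContinuousLinearMap', Matrix.smul_mulVec] } with hΦdef
  have hΦcont : Continuous Φ := Φ.continuous_of_finiteDimensional
  -- derivative of h at zs
  have hgd : HasFDerivAt (fun z => (B z) *ᵥ (ω z)) ((Φ (B zs)).comp (Φ (J zs))) zs := by
    have hc : ContinuousAt (fun z => Φ (B z)) zs := hΦcont.continuousAt.comp hBcont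
    exact aux_clm_apply hc (hJ zs) hcrit
  have hh : h = fun z => (1 / 2 : ℝ) • (ω z + (B z) *ᵥ (ω z)) := by
    funext z
    rw [hdef z]
    rw [Matrix.mulVec_mulVec, Matrix.mulVec_mulVec]
  have hhd : HasFDerivAt h ((1 / 2 : ℝ) • ((Φ (J zs)) + (Φ (B zs)).comp (Φ (J zs)))) zs := by
    rw [hh]
    exact ((hJ zs).add hgd).const_smul ((1:ℝ)/2)
  refine ⟨hhd.differentiableAt, ?_⟩
  -- the Jacobian matrix
  have hlam0 : lam zs = 0 := (hlam_zero zs).2 hcrit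
  set K := J zs with hKdef
  have hdetK : IsUnit K.det := (Matrix.isUnit_iff_isUnit_det _).1 hJinv
  have hdetKT : IsUnit Kᵀ.det := by rw [Matrix.det_transpose]; exact hdetK
  have hBK : B zs * K = Kᵀ := by
    have hM : Mz zs = Kᵀ * K := by
      rw [hMzdef]; simp [hlam0, hKdef]
    rw [hBdef]
    simp only
    rw [hM, Matrix.mul_inv_rev]
    simp only [mul_assoc]
    rw [Matrix.nonsing_inv_mul_cancel_left _ _ hdetKT, Matrix.nonsing_inv_mul _ hdetK, mul_one]
  have hjac : jacobianMatrix h zs = (1 / 2 : ℝ) • (K + Kᵀ) := by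
    rw [jacobianMatrix, hhd.fderiv]
    have hcoe : ((1 / 2 : ℝ) • ((Φ (J zs)) + (Φ (B zs)).comp (Φ (J zs)))).toLinearMap
        = (1 / 2 : ℝ) • ((Matrix.mulVecLin K) +
            (Matrix.mulVecLin (B zs)).comp (Matrix.mulVecLin K)) := rfl
    rw [hcoe]
    rw [_root_.map_smul, map_add, LinearMap.toMatrix'_comp]
    simp only [← Matrix.toLin'_apply', LinearMap.toMatrix'_toLin']
    rw [hBK]
  -- second derivative of f
  set D2 : ((Fin dx ⊕ Fin dy) → ℝ) →L[ℝ] (((Fin dx ⊕ Fin dy) → ℝ) →L[ℝ] ℝ) :=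
    fderiv ℝ (fderiv ℝ f) zs with hD2def
  have hfd2 : HasFDerivAt (fderiv ℝ f) D2 zs :=
    ((hf2.differentiable (by norm_num)) zs).hasFDerivAt
  have hDfw : ∀ w, HasFDerivAt (fun z => fderiv ℝ f z w) (D2.flip w) zs := by
    intro w
    have h2 := hfd2.clm_apply (hasFDerivAt_const w zs)
    simpa using h2
  have hsymm : ∀ v w, D2 v w = D2 w v := by
    intro v w
    exact hf.contDiffAt.isSymmSndFDerivAt (by norm_num) v w
  have hcomp : ∀ (i : Fin dx ⊕ Fin dy), HasFDerivAt (fun z => ω z i)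
      ((ContinuousLinearMap.proj (R := ℝ) (φ := fun _ : Fin dx ⊕ Fin dy => ℝ) i).comp
        (LinearMap.toContinuousLinearMap (Matrix.mulVecLin K))) zs :=
    fun i => by
      have h2 := (ContinuousLinearMap.proj (R := ℝ) (φ := fun _ : Fin dx ⊕ Fin dy => ℝ)
        i).hasFDerivAt.comp zs (hJ zs)
      exact h2
  have hKl : ∀ (a : Fin dx) (c : Fin dx ⊕ Fin dy),
      K (Sum.inl a) c = D2 (Pi.single c 1) (Pi.single (Sum.inl a) 1) := by
    intro a c
    have h2 := hcomp (Sum.inl a)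
    rw [show (fun z => ω z (Sum.inl a)) =
        fun z => fderiv ℝ f z (Pi.single (Sum.inl a) 1) from funext fun z => (hω z).1 a] at h2
    have h4 := h2.unique (hDfw (Pi.single (Sum.inl a) 1))
    have h5 := congrFun (congrArg DFunLike.coe h4) (Pi.single c 1)
    simpa [Matrix.mulVec_single] using h5
  have hKr : ∀ (a : Fin dy) (c : Fin dx ⊕ Fin dy),
      K (Sum.inr a) c = -(D2 (Pi.single c 1) (Pi.single (Sum.inr a) 1)) := by
    intro a c
    have h2 := hcomp (Sum.inr a)
    rw [show (fun z => ω z (Sum.inr a)) =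
        fun z => -(fderiv ℝ f z (Pi.single (Sum.inr a) 1)) from funext fun z => (hω z).2 a] at h2
    have h4 := h2.unique (hDfw (Pi.single (Sum.inr a) 1)).neg
    have h5 := congrFun (congrArg DFunLike.coe h4) (Pi.single c 1)
    simpa [Matrix.mulVec_single] using h5
  -- the block matrices
  set P : Matrix (Fin dx) (Fin dx) ℝ := Matrix.of fun i j =>
    fderiv ℝ (fun z => fderiv ℝ f z (Pi.single (Sum.inl j) 1)) zs (Pi.single (Sum.inl i) 1)
    with hPdef
  set N : Matrix (Fin dy) (Fin dy) ℝ := -(Matrix.of fun i j =>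
    fderiv ℝ (fun z => fderiv ℝ f z (Pi.single (Sum.inr j) 1)) zs (Pi.single (Sum.inr i) 1))
    with hNdef
  have hPval : ∀ i j, P i j = D2 (Pi.single (Sum.inl i) 1) (Pi.single (Sum.inl j) 1) := by
    intro i j
    show fderiv ℝ (fun z => fderiv ℝ f z (Pi.single (Sum.inl j) 1)) zs (Pi.single (Sum.inl i) 1)
      = _
    rw [(hDfw (Pi.single (Sum.inl j) 1)).fderiv]
    rfl
  have hNval : ∀ i j, N i j = -(D2 (Pi.single (Sum.inr i) 1) (Pi.single (Sum.inr j) 1)) := by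
    intro i j
    show -(fderiv ℝ (fun z => fderiv ℝ f z (Pi.single (Sum.inr j) 1)) zs
      (Pi.single (Sum.inr i) 1)) = _
    rw [(hDfw (Pi.single (Sum.inr j) 1)).fderiv]
    rfl
  have hSblocks : (1 / 2 : ℝ) • (K + Kᵀ) = Matrix.fromBlocks P 0 0 N := by
    ext i j
    rcases i with a | a <;> rcases j with b | b <;>
      simp only [Matrix.smul_apply, Matrix.add_apply, Matrix.transpose_apply, smul_eq_mul,
        Matrix.fromBlocks_apply₁₁, Matrix.fromBlocks_apply₁₂, Matrix.fromBlocks_apply₂₁,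
        Matrix.fromBlocks_apply₂₂, Matrix.zero_apply]
    · rw [hKl a (Sum.inl b), hKl b (Sum.inl a), hPval a b,
        hsymm (Pi.single (Sum.inl b) 1) (Pi.single (Sum.inl a) 1)]
      ring
    · rw [hKl a (Sum.inr b), hKr b (Sum.inl a),
        hsymm (Pi.single (Sum.inr b) 1) (Pi.single (Sum.inl a) 1)]
      ring
    · rw [hKr a (Sum.inl b), hKl b (Sum.inr a),
        hsymm (Pi.single (Sum.inl b) 1) (Pi.single (Sum.inr a) 1)]
      ring
    · rw [hKr a (Sum.inr b), hKr b (Sum.inr a), hNval a b,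
        hsymm (Pi.single (Sum.inr b) 1) (Pi.single (Sum.inr a) 1)]
      ring
  have hPH : P.IsHermitian := by
    ext i j
    rw [Matrix.conjTranspose_apply, star_trivial, hPval, hPval, hsymm]
  have hNH : N.IsHermitian := by
    ext i j
    rw [Matrix.conjTranspose_apply, star_trivial, hNval, hNval, hsymm]
  have hFBH : (Matrix.fromBlocks P 0 0 N).IsHermitian :=
    Matrix.IsHermitian.fromBlocks hPH (by simp) hNH
  rw [show jacobianMatrix h zs = Matrix.fromBlocks P 0 0 N from hjac.trans hSblocks]
  rw [aux_spectrum_map hFBH]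
  constructor
  · rintro μ ⟨i, rfl⟩
    exact Complex.ofReal_im _
  · have hiff : (∀ μ ∈ Set.range (fun i => ((hFBH.eigenvalues i : ℝ) : ℂ)), 0 < μ.re) ↔
        ∀ i, 0 < hFBH.eigenvalues i := by
      constructor
      · intro hs i
        simpa using hs _ ⟨i, rfl⟩
      · rintro hs μ ⟨i, rfl⟩
        simpa using hs i
    rw [hiff]
    constructor
    · intro he
      exact (aux_posdef_blocks hPH hNH).1 (aux_posdef_of_eigs hFBH he)
    · intro hpn i
      exact ((aux_posdef_blocks hPH hNH).2 hpn).eigenvalues_pos i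
end

section
/- Consider the zero-sum game on ℝ² with cost f(x,y) = (1/2)(x² + 2xy + (1/10)y²), whose simultaneous-gradient vector field is ω(x,y) = (x + y, -(x + (1/10)y)). Then: (i) ω(x,y) = 0 if and only if (x,y) = (0,0); (ii) (0,0) is not a local Nash equilibrium of the game: for every δ > 0 there exists y with |y| < δ and f(0,y) > f(0,0); and (iii) every eigenvalue of the matrix !![1, 1; -1, -1/10] (the Jacobian of ω, which is constant) has strictly positive real part, so (0,0) is a locally asymptotically stable equilibrium of the gradient dynamics ż = -ω(z). -/
open Matrix

/-- The cost of the counterexample game of Appendix B. -/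
noncomputable def fCounter (x y : ℝ) : ℝ := (1 / 2) * (x ^ 2 + 2 * x * y + (1 / 10) * y ^ 2)

/-- The simultaneous-gradient vector field of the counterexample game. -/
noncomputable def ωCounter (p : ℝ × ℝ) : ℝ × ℝ := (p.1 + p.2, -(p.1 + (1 / 10) * p.2))

/-- Appendix B counterexample: the origin is the unique critical point of the gradient
dynamics, it is not a local Nash equilibrium, yet it is a locally asymptotically stable
equilibrium of the gradient dynamics. -/
theorem stmt_5 :
    (∀ p : ℝ × ℝ, ωCounter p = 0 ↔ p = 0) ∧
    (∀ δ : ℝ, 0 < δ → ∃ y : ℝ, |y| < δ ∧ fCounter 0 y > fCounter 0 0) ∧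
    (∀ μ ∈ spectrum ℂ
        ((!![1, 1; -1, -1/10] : Matrix (Fin 2) (Fin 2) ℝ).map Complex.ofReal),
      0 < μ.re) := by
  refine ⟨?_, ?_, ?_⟩
  · intro p
    constructor
    · intro h
      have h1 : p.1 + p.2 = 0 := congrArg Prod.fst h
      have h2 : -(p.1 + (1/10) * p.2) = 0 := congrArg Prod.snd h
      have : p.1 = 0 ∧ p.2 = 0 := by constructor <;> linarith
      exact Prod.ext this.1 this.2
    · rintro rfl
      simp [ωCounter]
  · intro δ hδ
    refine ⟨δ / 2, ?_, ?_⟩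
    · rw [abs_of_pos (by linarith)]; linarith
    · simp only [fCounter]
      nlinarith [sq_nonneg δ]
  · intro μ hμ
    rw [spectrum.mem_iff] at hμ
    have hdet : ((algebraMap ℂ _ μ - (!![1, 1; -1, -1/10] : Matrix (Fin 2) (Fin 2) ℝ).map Complex.ofReal)).det = 0 := by
      by_contra h
      exact hμ ((Matrix.isUnit_iff_isUnit_det _).mpr (Ne.isUnit h))
    have heq : μ ^ 2 - (9/10) * μ + 9/10 = 0 := by
      rw [Matrix.det_fin_two] at hdet
      simp [Matrix.sub_apply, Matrix.algebraMap_matrix_apply, Matrix.map_apply] at hdet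
      ring_nf at hdet ⊢
      linear_combination hdet
    have h1 := congrArg Complex.re heq
    have h2 := congrArg Complex.im heq
    simp [Complex.sub_re, Complex.add_re, Complex.mul_re, Complex.mul_im, pow_two] at h1 h2
    by_contra h
    push_neg at h
    rcases mul_eq_zero.mp (by linarith : (2 * μ.re - 9/10) * μ.im = 0) with h3 | h3
    · nlinarith
    · nlinarith [sq_nonneg μ.re, sq_nonneg (μ.re - 9/20)]
end

section
/- Consider the zero-sum game on ℝ² with cost f(x,y) = (1/2)(x² + 2xy + (1/10)y²), whose simultaneous-gradient vector field is ω(x,y) = (x + y, -(x + (1/10)y)). Then: (i) for every fixed y₀ ∈ ℝ, every differentiable function x : ℝ → ℝ satisfying x'(t) = -(x(t) + y₀) for all t ≥ 0 converges to -y₀ as t → ∞; (ii) every differentiable function y : ℝ → ℝ satisfying y'(t) = -(9/10)·y(t) for all t ≥ 0 (the slow dynamics ẏ = ω₂(-y, y) obtained by substituting the fast-timescale limit x = -y) converges to 0 as t → ∞; and (iii) the resulting limit point (0,0) is not a local Nash equilibrium of the game: for every δ > 0 there exists y with |y| < δ and f(0,y) > f(0,0). -/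
open Filter

/-- Key ODE lemma: if `deriv u t = -c * u t` for all `t ≥ 0` with `c > 0`, then `u → 0`. -/
lemma decay_lemma (c : ℝ) (hc : 0 < c) (u : ℝ → ℝ) (hu : Differentiable ℝ u)
    (hode : ∀ t : ℝ, 0 ≤ t → deriv u t = -c * u t) :
    Tendsto u atTop (nhds 0) := by
  set g : ℝ → ℝ := fun t => u t * Real.exp (c * t) with hg
  have hgderiv : ∀ t : ℝ, 0 ≤ t → HasDerivAt g 0 t := by
    intro t ht
    have h1 : HasDerivAt u (deriv u t) t := (hu t).hasDerivAt
    have h2 : HasDerivAt (fun s : ℝ => Real.exp (c * s)) (c * Real.exp (c * t)) t := by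
      have := (Real.hasDerivAt_exp (c * t)).comp t ((hasDerivAt_id t).const_mul c)
      exact this.congr_deriv (by ring)
    have := h1.mul h2
    rw [hode t ht] at this
    refine this.congr_deriv ?_
    ring
  have hconst : ∀ t : ℝ, 0 ≤ t → g t = g 0 := by
    intro t ht
    have := constant_of_has_deriv_right_zero (f := g) (a := 0) (b := t)
      (fun s hs => ((hgderiv s hs.1).continuousAt).continuousWithinAt)
      (fun s hs => (hgderiv s hs.1).hasDerivWithinAt)
    exact this t ⟨ht, le_refl t⟩
  have hform : ∀ t : ℝ, 0 ≤ t → u t = g 0 * Real.exp (-(c * t)) := by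
    intro t ht
    have h := hconst t ht
    have hexp : Real.exp (c * t) ≠ 0 := Real.exp_ne_zero _
    rw [Real.exp_neg, ← h, hg]
    field_simp
  have hlim : Tendsto (fun t : ℝ => g 0 * Real.exp (-(c * t))) atTop (nhds 0) := by
    have h1 : Tendsto (fun t : ℝ => -(c * t)) atTop atBot := by
      apply tendsto_neg_atTop_atBot.comp
      exact Tendsto.const_mul_atTop hc tendsto_id
    have := Real.tendsto_exp_atBot.comp h1
    simpa using this.const_mul (g 0)
  refine hlim.congr' ?_
  filter_upwards [eventually_ge_atTop (0 : ℝ)] with t ht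
  exact (hform t ht).symm

/-- Appendix B: two-timescale simultaneous gradient descent on the counterexample game
converges to the non-Nash critical point `(0, 0)`: the fast dynamics `ẋ = -(x + y₀)`
converge to `-y₀`, the induced slow dynamics `ẏ = -(9/10) y` converge to `0`, and the
limit `(0, 0)` is not a local Nash equilibrium. -/
theorem stmt_6 :
    (∀ y₀ : ℝ, ∀ x : ℝ → ℝ, Differentiable ℝ x →
      (∀ t : ℝ, 0 ≤ t → deriv x t = -(x t + y₀)) →
      Tendsto x atTop (nhds (-y₀))) ∧
    (∀ y : ℝ → ℝ, Differentiable ℝ y →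
      (∀ t : ℝ, 0 ≤ t → deriv y t = -(9 / 10) * y t) →
      Tendsto y atTop (nhds 0)) ∧
    (∀ δ : ℝ, 0 < δ → ∃ y : ℝ, |y| < δ ∧ fCounter 0 y > fCounter 0 0) := by
  refine ⟨?_, ?_, ?_⟩
  · intro y₀ x hx hode
    have hu : Differentiable ℝ (fun t => x t + y₀) := hx.add_const y₀
    have h := decay_lemma 1 one_pos (fun t => x t + y₀) hu (by
      intro t ht
      rw [deriv_add_const, hode t ht]; ring)
    have := h.add_const (-y₀)
    simpa using this
  · intro y hy hode
    exact decay_lemma (9 / 10) (by norm_num) y hy hode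
  · intro δ hδ
    refine ⟨δ / 2, ?_, ?_⟩
    · rw [abs_of_pos (by linarith)]; linarith
    · simp only [fCounter]
      nlinarith [sq_nonneg δ, sq_nonneg (δ / 2)]
end

section
/- Let J be the real matrix !![1, 1; -1, -1/10]. Then for every real λ > 0, every eigenvalue of the matrix J + λ·(Jᵀ * J) has strictly positive real part. -/
open Matrix

/-- Appendix B: consensus optimization converges to the non-Nash equilibrium of the
counterexample game for every choice of the hyperparameter `λ > 0`. -/
theorem stmt_7 :
    ∀ lam : ℝ, 0 < lam →
      ∀ μ ∈ spectrum ℂ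
          ((((!![1, 1; -1, -1/10] : Matrix (Fin 2) (Fin 2) ℝ) +
            lam • ((!![1, 1; -1, -1/10] : Matrix (Fin 2) (Fin 2) ℝ)ᵀ *
              (!![1, 1; -1, -1/10] : Matrix (Fin 2) (Fin 2) ℝ)))).map Complex.ofReal),
        0 < μ.re := by
  intro lam hlam μ hμ
  rw [spectrum.mem_iff] at hμ
  have h0 : ((algebraMap ℂ (Matrix (Fin 2) (Fin 2) ℂ)) μ -
      ((!![1, 1; -1, -1/10] : Matrix (Fin 2) (Fin 2) ℝ) +
        lam • ((!![1, 1; -1, -1/10] : Matrix (Fin 2) (Fin 2) ℝ)ᵀ *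
          (!![1, 1; -1, -1/10] : Matrix (Fin 2) (Fin 2) ℝ))).map Complex.ofReal).det = 0 := by
    by_contra h
    exact hμ ((Matrix.isUnit_iff_isUnit_det _).mpr (isUnit_iff_ne_zero.mpr h))
  simp [Matrix.det_fin_two, Matrix.algebraMap_eq_diagonal, Matrix.mul_apply,
    Fin.sum_univ_two, Matrix.smul_apply, Matrix.transpose_apply, Matrix.vecHead, Matrix.vecTail,
    Matrix.cons_val_zero, Matrix.cons_val_one] at h0
  have hre := congrArg Complex.re h0
  have him := congrArg Complex.im h0
  simp [Complex.mul_re, Complex.mul_im, Complex.add_re, Complex.add_im, Complex.sub_re,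
    Complex.sub_im, Complex.ofReal_re, Complex.ofReal_im] at hre him
  have h2 : μ.im * (2*μ.re - (9/10 + 301/100*lam)) = 0 := by linear_combination him
  rcases mul_eq_zero.mp h2 with hy | hx
  · by_contra hx
    push_neg at hx
    rw [hy] at hre
    nlinarith [sq_nonneg μ.re, mul_pos hlam hlam, mul_nonneg hlam.le (neg_nonneg.2 hx),
      mul_nonneg (mul_nonneg hlam.le hlam.le) (neg_nonneg.2 hx)]
  · nlinarith
end

section
/- Let J be the real matrix !![1, 1; -1, -1/10]. Then for every real λ > 0, every eigenvalue of the matrix J + (λ/2)·((J - Jᵀ)ᵀ * J) has strictly positive real part. -/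
open Matrix

/-- Appendix B: the symplectic gradient adjustment converges to the non-Nash equilibrium of
the counterexample game for every choice of the hyperparameter `λ > 0`. -/
theorem stmt_8 :
    ∀ lam : ℝ, 0 < lam →
      ∀ μ ∈ spectrum ℂ
          ((((!![1, 1; -1, -1/10] : Matrix (Fin 2) (Fin 2) ℝ) +
            (lam / 2) • (((!![1, 1; -1, -1/10] : Matrix (Fin 2) (Fin 2) ℝ) -
                (!![1, 1; -1, -1/10] : Matrix (Fin 2) (Fin 2) ℝ)ᵀ)ᵀ *
              (!![1, 1; -1, -1/10] : Matrix (Fin 2) (Fin 2) ℝ)))).map Complex.ofReal),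
        0 < μ.re := by
  intro lam hlam μ hμ
  have hA : ((!![1, 1; -1, -1/10] : Matrix (Fin 2) (Fin 2) ℝ) +
            (lam / 2) • (((!![1, 1; -1, -1/10] : Matrix (Fin 2) (Fin 2) ℝ) -
                (!![1, 1; -1, -1/10] : Matrix (Fin 2) (Fin 2) ℝ)ᵀ)ᵀ *
              (!![1, 1; -1, -1/10] : Matrix (Fin 2) (Fin 2) ℝ))) =
      (!![1 + lam, 1 + lam/10; (-1) + lam, (-(1/10)) + lam] : Matrix (Fin 2) (Fin 2) ℝ) := by
    ext i j
    fin_cases i <;> fin_cases j <;>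
      simp [Matrix.mul_apply, Fin.sum_univ_two, Matrix.smul_apply, Matrix.transpose_apply,
        Matrix.sub_apply, Matrix.vecHead, Matrix.vecTail] <;> ring
  rw [hA] at hμ
  have hmap : ((!![1 + lam, 1 + lam/10; (-1) + lam, (-(1/10)) + lam] :
      Matrix (Fin 2) (Fin 2) ℝ)).map Complex.ofReal =
      (!![(1 + lam : ℝ), ((1 + lam/10 : ℝ) : ℂ); (((-1) + lam : ℝ) : ℂ),
        (((-(1/10)) + lam : ℝ) : ℂ)] : Matrix (Fin 2) (Fin 2) ℂ) := by
    ext i j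
    fin_cases i <;> fin_cases j <;> simp
  rw [hmap, spectrum.mem_iff] at hμ
  -- turn non-invertibility into vanishing determinant
  have hdet : ((Matrix.scalar (Fin 2)) μ -
      (!![(1 + lam : ℝ), ((1 + lam/10 : ℝ) : ℂ); (((-1) + lam : ℝ) : ℂ),
        (((-(1/10)) + lam : ℝ) : ℂ)] : Matrix (Fin 2) (Fin 2) ℂ)).det = 0 := by
    by_contra h
    exact hμ ((Matrix.isUnit_iff_isUnit_det _).mpr (isUnit_iff_ne_zero.mpr h))
  have hdet' : (μ - ((1 + lam : ℝ) : ℂ)) * (μ - (((-(1/10)) + lam : ℝ) : ℂ)) -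
      ((1 + lam/10 : ℝ) : ℂ) * (((-1) + lam : ℝ) : ℂ) = 0 := by
    rw [Matrix.det_fin_two] at hdet
    simp [Matrix.scalar_apply, Matrix.diagonal_apply, Matrix.sub_apply] at hdet
    push_cast at hdet ⊢
    linear_combination hdet
  have h1 := congrArg Complex.re hdet'
  have h2 := congrArg Complex.im hdet'
  simp only [Complex.sub_re, Complex.sub_im, Complex.mul_re, Complex.mul_im,
    Complex.ofReal_re, Complex.ofReal_im, Complex.zero_re, Complex.zero_im] at h1 h2
  by_cases hb0 : μ.im = 0
  · rw [hb0] at h1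
    by_contra hle
    push_neg at hle
    nlinarith [sq_nonneg μ.re, sq_nonneg lam, mul_nonneg (neg_nonneg.mpr hle) hlam.le]
  · -- from imaginary part: 2a = trace
    have ha : μ.re = (9/10 + 2*lam)/2 := by
      rcases mul_eq_zero.mp (by nlinarith : (2*μ.re - (9/10 + 2*lam)) * μ.im = 0) with h | h
      · linarith
      · exact absurd h hb0
    rw [ha]
    linarith
end

section
/- Under the stated assumptions on ω, J, λ and h, let λ₁ : ℝ^d → ℝ be continuously differentiable with 0 ≤ λ₁(z) for all z and λ₁(z) = 0 ⟺ ω(z) = 0, let u : ℝ → ℝ^d be any function, and define the time-varying vector field h_TV(z,t) = h(z) + λ₁(z)·u(t). Let z* ∈ ℝ^d satisfy ω(z*) = 0 and suppose J(z*) is invertible. Then for every t ∈ ℝ, the map z ↦ h_TV(z,t) is differentiable at z* and its Jacobian matrix at z* equals (1/2)(J(z*) + Jᵀ(z*)); in particular the Jacobian at z* is independent of t and is a symmetric matrix, so all of its eigenvalues are real. -/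
open Matrix

open scoped ComplexOrder in
theorem aux_spec_real {n : ℕ} (A : Matrix (Fin n) (Fin n) ℝ) (hA : A.IsSymm) :
    ∀ μ ∈ spectrum ℂ (A.map Complex.ofReal), μ.im = 0 := by
  intro μ hμ
  set M := A.map Complex.ofReal with hMdef
  have hherm : Mᴴ = M := by
    ext i j
    have hji : A j i = A i j := congrFun (congrFun hA i) j
    simp [hMdef, Matrix.conjTranspose_apply, Matrix.map_apply, hji]
  rw [spectrum.mem_iff] at hμ
  have hdet : (algebraMap ℂ (Matrix (Fin n) (Fin n) ℂ) μ - M).det = 0 := by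
    by_contra hd
    exact hμ ((Matrix.isUnit_iff_isUnit_det _).2 (isUnit_iff_ne_zero.2 hd))
  obtain ⟨v, hv0, hveq⟩ := Matrix.exists_mulVec_eq_zero_iff.2 hdet
  have hMv : M *ᵥ v = μ • v := by
    rw [Matrix.sub_mulVec] at hveq
    have h2 : algebraMap ℂ (Matrix (Fin n) (Fin n) ℂ) μ *ᵥ v = μ • v := by
      rw [Algebra.algebraMap_eq_smul_one, Matrix.smul_mulVec, Matrix.one_mulVec]
    rw [h2] at hveq
    exact (sub_eq_zero.mp hveq).symm
  have key : μ * (star v ⬝ᵥ v) = star μ * (star v ⬝ᵥ v) := by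
    have h1 : star v ⬝ᵥ (M *ᵥ v) = μ * (star v ⬝ᵥ v) := by
      rw [hMv, dotProduct_smul, smul_eq_mul]
    have h2 : star v ⬝ᵥ (M *ᵥ v) = star μ * (star v ⬝ᵥ v) := by
      rw [Matrix.dotProduct_mulVec]
      have h3 : star v ᵥ* M = star μ • star v := by
        have := Matrix.star_mulVec (M := M) (v := v)
        rw [hherm] at this
        rw [← this, hMv, star_smul]
      rw [h3, smul_dotProduct, smul_eq_mul]
    rw [← h1, h2]
  have hc : (star v ⬝ᵥ v) ≠ 0 := fun hc0 =>
    hv0 (dotProduct_star_self_eq_zero.mp hc0)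
  have hμs : μ = star μ := mul_right_cancel₀ hc key
  have h4 : μ.im = -μ.im := by
    simpa [Complex.star_def, Complex.conj_im] using congrArg Complex.im hμs
  linarith


section DerivAux

attribute [local instance] Matrix.linftyOpNormedAddCommGroup Matrix.linftyOpNormedSpace
  Matrix.linftyOpNormedRing Matrix.linftyOpNormedAlgebra

theorem aux_deriv {d : ℕ}
    (ω : (Fin d → ℝ) → (Fin d → ℝ))
    (J : (Fin d → ℝ) → Matrix (Fin d) (Fin d) ℝ)
    (lam : (Fin d → ℝ) → ℝ)
    (hω : ContDiff ℝ 2 ω)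
    (hJ : ∀ z, HasFDerivAt ω (LinearMap.toContinuousLinearMap (Matrix.mulVecLin (J z))) z)
    (hlamC1 : ContDiff ℝ 1 lam)
    (hlam_zero : ∀ z, lam z = 0 ↔ ω z = 0)
    (hinv : ∀ z, IsUnit ((J z)ᵀ * J z + lam z • (1 : Matrix (Fin d) (Fin d) ℝ)))
    (h : (Fin d → ℝ) → (Fin d → ℝ))
    (hdef : ∀ z, h z = (1 / 2 : ℝ) •
      (ω z + ((J z)ᵀ).mulVec ((((J z)ᵀ * J z + lam z • (1 : Matrix (Fin d) (Fin d) ℝ))⁻¹).mulVec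
        (((J z)ᵀ).mulVec (ω z)))))
    (lam1 : (Fin d → ℝ) → ℝ)
    (hlam1C1 : ContDiff ℝ 1 lam1)
    (hlam1_nonneg : ∀ z, 0 ≤ lam1 z)
    (hlam1_zero : ∀ z, lam1 z = 0 ↔ ω z = 0)
    (u : ℝ → (Fin d → ℝ))
    (zs : Fin d → ℝ)
    (hcrit : ω zs = 0)
    (hJinv : IsUnit (J zs)) :
    ∀ t : ℝ, HasFDerivAt (fun z => h z + lam1 z • u t)
      (LinearMap.toContinuousLinearMap
        (Matrix.mulVecLin ((1 / 2 : ℝ) • (J zs + (J zs)ᵀ)))) zs := by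
  intro t
  -- notation
  have hlamzs : lam zs = 0 := (hlam_zero zs).2 hcrit
  have hlam1zs : lam1 zs = 0 := (hlam1_zero zs).2 hcrit
  -- λ₁ has vanishing derivative at zs
  have hl1 : HasFDerivAt lam1 (0 : (Fin d → ℝ) →L[ℝ] ℝ) zs := by
    have hd : DifferentiableAt ℝ lam1 zs := (hlam1C1.differentiable one_ne_zero).differentiableAt
    have hmin : IsLocalMin lam1 zs :=
      Filter.Eventually.of_forall fun z => by rw [hlam1zs]; exact hlam1_nonneg z
    have h0 := hmin.fderiv_eq_zero
    simpa [h0] using hd.hasFDerivAt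
  -- the time-varying term has vanishing derivative at zs
  have hterm2 : HasFDerivAt (fun z => lam1 z • u t)
      (0 : (Fin d → ℝ) →L[ℝ] (Fin d → ℝ)) zs := by
    have := hl1.smul (hasFDerivAt_const (u t) zs)
    refine this.congr_fderiv ?_
    ext y i
    simp [hlam1zs]
  -- J is differentiable at zs
  have hJdiff : DifferentiableAt ℝ J zs := by
    have hfd1 : Differentiable ℝ (fderiv ℝ ω) :=
      (hω.fderiv_right (m := 1) (by norm_num)).differentiable one_ne_zero
    have hJeq : J = fun z =>
        (LinearMap.toMatrix'.toLinearMap.comp (ContinuousLinearMap.coeLM ℝ))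
          (fderiv ℝ ω z) := by
      funext z
      rw [(hJ z).fderiv]
      have h1 : ContinuousLinearMap.coeLM ℝ
          (LinearMap.toContinuousLinearMap (Matrix.mulVecLin (J z)))
          = Matrix.mulVecLin (J z) := rfl
      simp only [LinearMap.comp_apply, LinearEquiv.coe_toLinearMap, h1]
      rw [← Matrix.toLin'_apply', LinearMap.toMatrix'_toLin']
    rw [hJeq]
    exact (LinearMap.toContinuousLinearMap
      (LinearMap.toMatrix'.toLinearMap.comp
        (ContinuousLinearMap.coeLM ℝ))).differentiableAt.comp zs hfd1.differentiableAt
  -- Jᵀ is differentiable at zs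
  have hJT : DifferentiableAt ℝ (fun z => (J z)ᵀ) zs := by
    have := (LinearMap.toContinuousLinearMap
      (Matrix.transposeLinearEquiv (Fin d) (Fin d) ℝ ℝ).toLinearMap).differentiableAt.comp
      zs hJdiff
    exact this
  have hlamd : DifferentiableAt ℝ lam zs := (hlamC1.differentiable one_ne_zero).differentiableAt
  -- M is differentiable at zs
  have hM : DifferentiableAt ℝ
      (fun z => (J z)ᵀ * J z + lam z • (1 : Matrix (Fin d) (Fin d) ℝ)) zs :=
    (hJT.mul hJdiff).add (hlamd.smul_const (1 : Matrix (Fin d) (Fin d) ℝ))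
  -- M⁻¹ is differentiable at zs
  have hMinv : DifferentiableAt ℝ
      (fun z => ((J z)ᵀ * J z + lam z • (1 : Matrix (Fin d) (Fin d) ℝ))⁻¹) zs := by
    have heq : (fun z => ((J z)ᵀ * J z + lam z • (1 : Matrix (Fin d) (Fin d) ℝ))⁻¹)
        = (fun A : Matrix (Fin d) (Fin d) ℝ => Ring.inverse A) ∘
          (fun z => (J z)ᵀ * J z + lam z • (1 : Matrix (Fin d) (Fin d) ℝ)) := by
      funext z
      simp [Function.comp, Matrix.nonsing_inv_eq_ringInverse]
    rw [heq]
    exact (differentiableAt_inverse (hinv zs)).comp zs hM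
  -- B is differentiable at zs
  have hB : DifferentiableAt ℝ
      (fun z => (J z)ᵀ * ((((J z)ᵀ * J z + lam z • (1 : Matrix (Fin d) (Fin d) ℝ))⁻¹) * (J z)ᵀ)) zs :=
    hJT.mul (hMinv.mul hJT)
  -- bundle matrices as continuous linear maps
  set b : Matrix (Fin d) (Fin d) ℝ →L[ℝ] ((Fin d → ℝ) →L[ℝ] (Fin d → ℝ)) :=
    LinearMap.toContinuousLinearMap
      ((LinearMap.toContinuousLinearMap :
          ((Fin d → ℝ) →ₗ[ℝ] (Fin d → ℝ)) ≃ₗ[ℝ] ((Fin d → ℝ) →L[ℝ] (Fin d → ℝ))).toLinearMap.comp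
        (Matrix.toLin' : Matrix (Fin d) (Fin d) ℝ ≃ₗ[ℝ] ((Fin d → ℝ) →ₗ[ℝ] (Fin d → ℝ))).toLinearMap) with hbdef
  have hbapp : ∀ (A : Matrix (Fin d) (Fin d) ℝ) (v : Fin d → ℝ), b A v = A.mulVec v := by
    intro A v
    simp [hbdef, Matrix.toLin'_apply]
  -- derivative of the product term
  have hBc : DifferentiableAt ℝ
      (fun z => b ((J z)ᵀ * ((((J z)ᵀ * J z + lam z • (1 : Matrix (Fin d) (Fin d) ℝ))⁻¹) * (J z)ᵀ))) zs :=
    b.differentiableAt.comp zs hB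
  have hg : HasFDerivAt
      (fun z => b ((J z)ᵀ * ((((J z)ᵀ * J z + lam z • (1 : Matrix (Fin d) (Fin d) ℝ))⁻¹) * (J z)ᵀ)) (ω z))
      ((b ((J zs)ᵀ * ((((J zs)ᵀ * J zs + lam zs • (1 : Matrix (Fin d) (Fin d) ℝ))⁻¹) * (J zs)ᵀ))).comp
          (LinearMap.toContinuousLinearMap (Matrix.mulVecLin (J zs)))
        + (fderiv ℝ
            (fun z => b ((J z)ᵀ * ((((J z)ᵀ * J z + lam z • (1 : Matrix (Fin d) (Fin d) ℝ))⁻¹) * (J z)ᵀ))) zs).flip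
            (ω zs)) zs :=
    hBc.hasFDerivAt.clm_apply (hJ zs)
  rw [hcrit] at hg
  -- derivative of the full field
  have htot := (((hJ zs).add hg).const_smul (1 / 2 : ℝ)).add hterm2
  -- the function is the one we want
  have hfun : (fun z => (1 / 2 : ℝ) •
        (ω z + b ((J z)ᵀ * ((((J z)ᵀ * J z + lam z • (1 : Matrix (Fin d) (Fin d) ℝ))⁻¹) * (J z)ᵀ)) (ω z))
        + lam1 z • u t)
      = fun z => h z + lam1 z • u t := by
    funext z
    rw [hdef z, hbapp]
    simp [Matrix.mulVec_mulVec]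
  replace htot := htot.congr_of_eventuallyEq (Filter.Eventually.of_forall fun z => (congrFun hfun z).symm)
  -- identify the derivative
  refine htot.congr_fderiv ?_
  have hdet : IsUnit (J zs).det := (Matrix.isUnit_iff_isUnit_det _).1 hJinv
  have hdetT : IsUnit ((J zs)ᵀ).det := by rwa [Matrix.det_transpose]
  have hBJ : (J zs)ᵀ * ((((J zs)ᵀ * J zs + lam zs • (1 : Matrix (Fin d) (Fin d) ℝ))⁻¹) * (J zs)ᵀ) * J zs
      = (J zs)ᵀ := by
    rw [hlamzs, zero_smul, add_zero, Matrix.mul_inv_rev,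
      Matrix.mul_assoc ((J zs)⁻¹), Matrix.nonsing_inv_mul _ hdetT, Matrix.mul_one,
      Matrix.mul_assoc, Matrix.nonsing_inv_mul _ hdet, Matrix.mul_one]
  ext y i
  have happ : b ((J zs)ᵀ * ((((J zs)ᵀ * J zs + lam zs • (1 : Matrix (Fin d) (Fin d) ℝ))⁻¹) * (J zs)ᵀ))
      ((J zs).mulVec y)
      = ((J zs)ᵀ).mulVec y := by
    rw [hbapp, Matrix.mulVec_mulVec, hBJ]
  simp only [ContinuousLinearMap.add_apply, ContinuousLinearMap.coe_smul',
    ContinuousLinearMap.comp_apply, ContinuousLinearMap.zero_apply,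
    LinearMap.coe_toContinuousLinearMap', Matrix.mulVecLin_apply, Pi.smul_apply,
    Pi.add_apply, Pi.zero_apply, add_zero]
  rw [happ]
  simp [Matrix.add_mulVec, Matrix.smul_mulVec, mul_add]

end DerivAux

/-- Jacobian claim of Theorem 3 (Appendix A): at a critical point `z*` of `ω` where `J(z*)`
is invertible, the Jacobian of the time-varying adjusted field `h_TV(·, t) = h + λ₁(·)·u(t)`
is, for every `t`, the symmetric matrix `(1/2)(J(z*) + J(z*)ᵀ)`, whose eigenvalues are all
real. -/
theorem stmt_11 {d : ℕ}
    (ω : (Fin d → ℝ) → (Fin d → ℝ))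
    (J : (Fin d → ℝ) → Matrix (Fin d) (Fin d) ℝ)
    (lam : (Fin d → ℝ) → ℝ)
    (hω : ContDiff ℝ 2 ω)
    (hJ : ∀ z, HasFDerivAt ω (LinearMap.toContinuousLinearMap (Matrix.mulVecLin (J z))) z)
    (hlamC1 : ContDiff ℝ 1 lam)
    (hlam_nonneg : ∀ z, 0 ≤ lam z)
    (hlam_zero : ∀ z, lam z = 0 ↔ ω z = 0)
    (hinv : ∀ z, IsUnit ((J z)ᵀ * J z + lam z • (1 : Matrix (Fin d) (Fin d) ℝ)))
    (h : (Fin d → ℝ) → (Fin d → ℝ))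
    (hdef : ∀ z, h z = (1 / 2 : ℝ) •
      (ω z + ((J z)ᵀ).mulVec ((((J z)ᵀ * J z + lam z • (1 : Matrix (Fin d) (Fin d) ℝ))⁻¹).mulVec
        (((J z)ᵀ).mulVec (ω z)))))
    (lam1 : (Fin d → ℝ) → ℝ)
    (hlam1C1 : ContDiff ℝ 1 lam1)
    (hlam1_nonneg : ∀ z, 0 ≤ lam1 z)
    (hlam1_zero : ∀ z, lam1 z = 0 ↔ ω z = 0)
    (u : ℝ → (Fin d → ℝ))
    (zs : Fin d → ℝ)
    (hcrit : ω zs = 0)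
    (hJinv : IsUnit (J zs)) :
    (∀ t : ℝ, HasFDerivAt (fun z => h z + lam1 z • u t)
      (LinearMap.toContinuousLinearMap
        (Matrix.mulVecLin ((1 / 2 : ℝ) • (J zs + (J zs)ᵀ)))) zs) ∧
    ((1 / 2 : ℝ) • (J zs + (J zs)ᵀ)).IsSymm ∧
    (∀ μ ∈ spectrum ℂ
        (((1 / 2 : ℝ) • (J zs + (J zs)ᵀ)).map Complex.ofReal), μ.im = 0) := by
  have hsymm : ((1 / 2 : ℝ) • (J zs + (J zs)ᵀ)).IsSymm := by
    unfold Matrix.IsSymm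
    rw [Matrix.transpose_smul, Matrix.transpose_add, Matrix.transpose_transpose, add_comm]
  exact ⟨aux_deriv ω J lam hω hJ hlamC1 hlam_zero hinv h hdef lam1 hlam1C1 hlam1_nonneg
      hlam1_zero u zs hcrit hJinv,
    hsymm, aux_spec_real _ hsymm⟩
end

section
/- Under the stated assumptions on ω, J, λ, let g : ℝ^d → ℝ be continuously differentiable with g(z) = 1 whenever ω(z) = 0, and define the damped adjusted vector field h_g(z) = (1/2)(ω(z) + g(z)·Jᵀ(z)(Jᵀ(z)J(z) + λ(z)I)⁻¹ Jᵀ(z) ω(z)). Let z* ∈ ℝ^d satisfy ω(z*) = 0 and suppose J(z*) is invertible. Then h_g is differentiable at z* and the Jacobian matrix of h_g at z* equals (1/2)(J(z*) + Jᵀ(z*)); in particular it is symmetric and all of its eigenvalues are real. -/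
open Matrix

section Aux
variable {E : Type*} [NormedAddCommGroup E] [NormedSpace ℝ E] {n : ℕ} {x : E}

lemma diffAt_det {f : E → Matrix (Fin n) (Fin n) ℝ}
    (hf : ∀ i j, DifferentiableAt ℝ (fun z => f z i j) x) :
    DifferentiableAt ℝ (fun z => (f z).det) x := by
  simp only [Matrix.det_apply, Units.smul_def, zsmul_eq_mul]
  apply DifferentiableAt.fun_sum
  intro σ _
  apply (differentiableAt_const _).mul
  exact (HasFDerivAt.finset_prod (u := Finset.univ) (g := fun i z => f z (σ i) i)
    (g' := fun i => fderiv ℝ (fun z => f z (σ i) i) x)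
    (fun i _ => (hf (σ i) i).hasFDerivAt)).differentiableAt

lemma diffAt_mul {f g : E → Matrix (Fin n) (Fin n) ℝ}
    (hf : ∀ i j, DifferentiableAt ℝ (fun z => f z i j) x)
    (hg : ∀ i j, DifferentiableAt ℝ (fun z => g z i j) x) (i j : Fin n) :
    DifferentiableAt ℝ (fun z => (f z * g z) i j) x := by
  simp only [Matrix.mul_apply]
  exact DifferentiableAt.fun_sum fun k _ => (hf i k).mul (hg k j)

lemma diffAt_inv {f : E → Matrix (Fin n) (Fin n) ℝ}
    (hf : ∀ i j, DifferentiableAt ℝ (fun z => f z i j) x)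
    (hdet : (f x).det ≠ 0) (i j : Fin n) :
    DifferentiableAt ℝ (fun z => (f z)⁻¹ i j) x := by
  have hadj : DifferentiableAt ℝ (fun z => (f z).adjugate i j) x := by
    simp only [Matrix.adjugate_apply]
    apply diffAt_det
    intro k l
    simp only [Matrix.updateRow_apply]
    by_cases h : k = j
    · simp only [h, if_pos rfl]
      exact differentiableAt_const _
    · simp only [if_neg h]
      exact hf k l
  have : (fun z => (f z)⁻¹ i j) = fun z => ((f z).det)⁻¹ * (f z).adjugate i j := by
    funext z
    rw [Matrix.inv_def, Ring.inverse_eq_inv']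
    simp [Matrix.smul_apply, smul_eq_mul]
  rw [this]
  exact ((diffAt_det hf).inv hdet).mul hadj

end Aux

lemma im_eq_zero_aux {d : ℕ} (S : Matrix (Fin d) (Fin d) ℝ) (hS : S.IsSymm) :
    ∀ μ ∈ spectrum ℂ (S.map Complex.ofReal), μ.im = 0 := by
  intro μ hμ
  have hH : (S.map Complex.ofReal).IsHermitian := by
    rw [Matrix.IsHermitian]
    ext i j
    have := congrFun (congrFun hS i) j
    simp only [Matrix.conjTranspose_apply, Matrix.map_apply, Matrix.transpose_apply] at this ⊢
    rw [← this]
    simp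
  have hsymm := (Matrix.isHermitian_iff_isSymmetric).mp hH
  rw [← Matrix.spectrum_toEuclideanLin] at hμ
  have hev := Module.End.hasEigenvalue_iff_mem_spectrum.mpr hμ
  exact Complex.conj_eq_iff_im.mp (hsymm.conj_eigenvalue_eq_self hev)

/-- End of Section 3: damping the adjustment term by a function `g` with `g(z) = 1` at
critical points of `ω` does not change the Jacobian of the adjusted field at a critical
point `z*`: it is still the symmetric matrix `(1/2)(J(z*) + J(z*)ᵀ)`, with real
eigenvalues. -/
theorem stmt_14 {d : ℕ}
    (ω : (Fin d → ℝ) → (Fin d → ℝ))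
    (J : (Fin d → ℝ) → Matrix (Fin d) (Fin d) ℝ)
    (lam : (Fin d → ℝ) → ℝ)
    (hω : ContDiff ℝ 2 ω)
    (hJ : ∀ z, HasFDerivAt ω (LinearMap.toContinuousLinearMap (Matrix.mulVecLin (J z))) z)
    (hlamC1 : ContDiff ℝ 1 lam)
    (hlam_nonneg : ∀ z, 0 ≤ lam z)
    (hlam_zero : ∀ z, lam z = 0 ↔ ω z = 0)
    (hinv : ∀ z, IsUnit ((J z)ᵀ * J z + lam z • (1 : Matrix (Fin d) (Fin d) ℝ)))
    (g : (Fin d → ℝ) → ℝ)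
    (hgC1 : ContDiff ℝ 1 g)
    (hg1 : ∀ z, ω z = 0 → g z = 1)
    (hg : (Fin d → ℝ) → (Fin d → ℝ))
    (hgdef : ∀ z, hg z = (1 / 2 : ℝ) •
      (ω z + g z • ((J z)ᵀ).mulVec
        ((((J z)ᵀ * J z + lam z • (1 : Matrix (Fin d) (Fin d) ℝ))⁻¹).mulVec
          (((J z)ᵀ).mulVec (ω z)))))
    (zs : Fin d → ℝ)
    (hcrit : ω zs = 0)
    (hJinv : IsUnit (J zs)) :
    HasFDerivAt hg
      (LinearMap.toContinuousLinearMap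
        (Matrix.mulVecLin ((1 / 2 : ℝ) • (J zs + (J zs)ᵀ)))) zs ∧
    ((1 / 2 : ℝ) • (J zs + (J zs)ᵀ)).IsSymm ∧
    (∀ μ ∈ spectrum ℂ
        (((1 / 2 : ℝ) • (J zs + (J zs)ᵀ)).map Complex.ofReal), μ.im = 0) := by
  classical
  have hsym : ((1 / 2 : ℝ) • (J zs + (J zs)ᵀ)).IsSymm := by
    rw [Matrix.IsSymm, Matrix.transpose_smul, Matrix.transpose_add, Matrix.transpose_transpose,
      add_comm]
  refine ⟨?_, hsym, im_eq_zero_aux _ hsym⟩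
  have hlam0 : lam zs = 0 := (hlam_zero zs).2 hcrit
  set Mz : (Fin d → ℝ) → Matrix (Fin d) (Fin d) ℝ :=
    fun z => (J z)ᵀ * J z + lam z • (1 : Matrix (Fin d) (Fin d) ℝ) with hMz
  set A : (Fin d → ℝ) → Matrix (Fin d) (Fin d) ℝ :=
    fun z => (J z)ᵀ * ((Mz z)⁻¹ * (J z)ᵀ) with hA
  have hgfun : hg = fun z => (1 / 2 : ℝ) • (ω z + g z • (A z *ᵥ ω z)) := by
    funext z
    rw [hgdef z, Matrix.mulVec_mulVec, Matrix.mulVec_mulVec, Matrix.mul_assoc]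
  -- key matrix identities
  have hMunit : IsUnit (Mz zs) := hinv zs
  have hdet : (Mz zs).det ≠ 0 := ((Matrix.isUnit_iff_isUnit_det _).mp hMunit).ne_zero
  have key : A zs * J zs = (J zs)ᵀ := by
    have h1 : (Mz zs)⁻¹ * Mz zs = 1 :=
      Matrix.nonsing_inv_mul _ ((Matrix.isUnit_iff_isUnit_det _).mp hMunit)
    have hMzs : Mz zs = (J zs)ᵀ * J zs := by
      simp [hMz, hlam0]
    show ((J zs)ᵀ * ((Mz zs)⁻¹ * (J zs)ᵀ)) * J zs = (J zs)ᵀ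
    rw [Matrix.mul_assoc, Matrix.mul_assoc ((Mz zs)⁻¹), ← hMzs, h1, Matrix.mul_one]
  -- differentiability of entries of J
  have hfd : ∀ z, fderiv ℝ ω z = LinearMap.toContinuousLinearMap (Matrix.mulVecLin (J z)) :=
    fun z => (hJ z).fderiv
  have hJent : ∀ i j, DifferentiableAt ℝ (fun z => J z i j) zs := by
    intro i j
    have h1 : Differentiable ℝ (fderiv ℝ ω) :=
      (hω.fderiv_right (m := 1) (by norm_num)).differentiable one_ne_zero
    have h2 : DifferentiableAt ℝ (fun z => fderiv ℝ ω z (Pi.single j 1) i) zs :=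
      differentiableAt_pi.mp
        ((h1.differentiableAt).clm_apply (differentiableAt_const (Pi.single j (1 : ℝ)))) i
    have h3 : (fun z => J z i j) = fun z => fderiv ℝ ω z (Pi.single j 1) i := by
      funext z
      rw [hfd z]
      simp
    rw [h3]
    exact h2
  have hJtent : ∀ i j, DifferentiableAt ℝ (fun z => (J z)ᵀ i j) zs := fun i j => hJent j i
  have hMent : ∀ i j, DifferentiableAt ℝ (fun z => Mz z i j) zs := by
    intro i j
    have h1 : DifferentiableAt ℝ (fun z => ((J z)ᵀ * J z) i j) zs :=
      diffAt_mul hJtent hJent i j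
    have h2 : (fun z => Mz z i j) =
        fun z => ((J z)ᵀ * J z) i j + lam z * (1 : Matrix (Fin d) (Fin d) ℝ) i j := by
      funext z
      simp [hMz, Matrix.add_apply, Matrix.smul_apply, smul_eq_mul]
    rw [h2]
    exact h1.add (((hlamC1.differentiable one_ne_zero) zs).mul (differentiableAt_const _))
  have hinvent : ∀ i j, DifferentiableAt ℝ (fun z => (Mz z)⁻¹ i j) zs :=
    diffAt_inv hMent hdet
  have hAent : ∀ i j, DifferentiableAt ℝ (fun z => A z i j) zs := by
    intro i j
    have := diffAt_mul hJtent (diffAt_mul hinvent hJtent) i j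
    simpa [hA] using this
  -- the derivative of the adjustment term
  set Jc : (Fin d → ℝ) →L[ℝ] (Fin d → ℝ) :=
    LinearMap.toContinuousLinearMap (Matrix.mulVecLin (J zs)) with hJc
  have hωpi : ∀ j, HasFDerivAt (fun z => ω z j) ((ContinuousLinearMap.proj j).comp Jc) zs :=
    fun j => hasFDerivAt_pi'.mp (hJ zs) j
  have hF : HasFDerivAt (fun z => g z • (A z *ᵥ ω z))
      (LinearMap.toContinuousLinearMap (Matrix.mulVecLin ((J zs)ᵀ))) zs := by
    apply hasFDerivAt_pi''
    intro i
    have hfe : (fun z => (g z • (A z *ᵥ ω z)) i) = fun z => ∑ j, (g z * A z i j) * ω z j := by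
      funext z
      simp [Matrix.mulVec, dotProduct, Finset.mul_sum, mul_assoc]
    have hterm : ∀ j, HasFDerivAt (fun z => (g z * A z i j) * ω z j)
        ((g zs * A zs i j) • ((ContinuousLinearMap.proj j).comp Jc)
          + (ω zs j) • fderiv ℝ (fun z => g z * A z i j) zs) zs := fun j =>
      HasFDerivAt.mul ((((hgC1.differentiable one_ne_zero) zs).mul (hAent i j)).hasFDerivAt) (hωpi j)
    have hsum := HasFDerivAt.fun_sum (u := Finset.univ)
      (fun j _ => hterm j)
    rw [hfe]
    refine hsum.congr_fderiv ?_
    ext v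
    have hzero : ∀ j, ω zs j = 0 := fun j => congrFun hcrit j
    have hgzs : g zs = 1 := hg1 zs hcrit
    simp only [ContinuousLinearMap.coe_sum', Finset.sum_apply, ContinuousLinearMap.add_apply,
      ContinuousLinearMap.coe_smul', Pi.smul_apply, ContinuousLinearMap.coe_comp',
      Function.comp_apply, ContinuousLinearMap.proj_apply, hzero, zero_smul, add_zero,
      hgzs, one_mul, smul_eq_mul, ContinuousLinearMap.coe_coe]
    have hmv : ∀ w : Fin d → ℝ, (Jc w) = J zs *ᵥ w := by
      intro w
      simp [hJc]
    have hre : ∑ j, A zs i j * (Jc v) j = ((A zs * J zs) *ᵥ v) i := by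
      rw [← Matrix.mulVec_mulVec]
      simp [hmv, Matrix.mulVec, dotProduct]
    rw [hre, key, Matrix.mulVec_transpose]
    simp [Matrix.mulVecLin_apply, Matrix.mulVec_transpose]
  -- assemble
  have hωd : HasFDerivAt ω Jc zs := hJ zs
  have hsum2 := (hωd.add hF).const_smul (1 / 2 : ℝ)
  rw [hgfun]
  refine hsum2.congr_fderiv ?_
  ext v i
  have h2 : (((1 / 2 : ℝ) • (J zs + (J zs)ᵀ)) *ᵥ v) i
      = ((1 / 2 : ℝ) • (J zs *ᵥ v + (J zs)ᵀ *ᵥ v)) i := by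
    rw [Matrix.smul_mulVec, Matrix.add_mulVec]
  simp only [ContinuousLinearMap.smul_apply, ContinuousLinearMap.add_apply,
    LinearMap.coe_toContinuousLinearMap', ContinuousLinearMap.coe_coe,
    Matrix.mulVecLin_apply, Pi.smul_apply, Pi.add_apply, smul_eq_mul, hJc] at h2 ⊢
  rw [h2]
end
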